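/- arXiv:2203.02163 — 2 statements merged into one kernel-verified Lean document; each statement's English description precedes it below -/
import Mathlib

section
/- Let $\eta = c + i d \in \mathbb{C}$ with $|\eta| < 1$ and $|\eta|^2 > c$, and suppose $0 < \omega < \frac{4(|\eta|^2 - c)}{(1-c)^2 + d^2}$. Then $\left|\tfrac{1}{2}[(2-\omega)\eta + \omega]\right| < |\eta|$. -/
theorem stmt_12 (η : ℂ) (ω : ℝ) (h1 : ‖η‖ < 1)
    (h2 : η.re < ‖η‖ ^ 2) (hω0 : 0 < ω)
    (hω : ω < 4 * (‖η‖ ^ 2 - η.re) / ((1 - η.re) ^ 2 + η.im ^ 2)) :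
    ‖(1 / 2 : ℂ) * (((2 - ω : ℝ) : ℂ) * η + ((ω : ℝ) : ℂ))‖ <
      ‖η‖ := by
  have hre : η.re < 1 := lt_of_le_of_lt (le_trans (le_abs_self _) (Complex.abs_re_le_norm η)) h1
  have hd : 0 < (1 - η.re) ^ 2 + η.im ^ 2 := by nlinarith [sq_nonneg η.im, mul_pos (sub_pos.2 hre) (sub_pos.2 hre)]
  have hω' : ω * ((1 - η.re) ^ 2 + η.im ^ 2) < 4 * (‖η‖ ^ 2 - η.re) :=
    (lt_div_iff₀ hd).mp hω
  have habs : ‖η‖ ^ 2 = η.re ^ 2 + η.im ^ 2 := by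
    rw [Complex.sq_norm, Complex.normSq_apply]; ring
  apply lt_of_pow_lt_pow_left₀ 2 (norm_nonneg _)
  have hsq : ‖(1 / 2 : ℂ) * (((2 - ω : ℝ) : ℂ) * η + ((ω : ℝ) : ℂ))‖ ^ 2 =
      (((2 - ω) * η.re + ω) / 2) ^ 2 + (((2 - ω) * η.im) / 2) ^ 2 := by
    rw [Complex.sq_norm, Complex.normSq_apply]
    simp [Complex.add_re, Complex.add_im, Complex.mul_re, Complex.mul_im]
    ring
  rw [hsq]; rw [habs] at h2 hω' ⊢
  nlinarith [mul_lt_mul_of_pos_left hω' hω0]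
end

section
/- Let $\eta = c + i d \in \mathbb{C}$ with $|\eta|^2 \le c$ and let $0 < \omega < 2$. Then $|\eta| \le \left|\tfrac{1}{2}[(2-\omega)\eta + \omega]\right|$, and if moreover $|\eta| < 1$ then $\left|\tfrac{1}{2}[(2-\omega)\eta + \omega]\right| < 1$. -/
theorem stmt_13 (η : ℂ) (ω : ℝ) (h : ‖η‖ ^ 2 ≤ η.re)
    (hω0 : 0 < ω) (hω2 : ω < 2) :
    ‖η‖ ≤
        ‖(1 / 2 : ℂ) * (((2 - ω : ℝ) : ℂ) * η + ((ω : ℝ) : ℂ))‖ ∧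
      (‖η‖ < 1 →
        ‖(1 / 2 : ℂ) * (((2 - ω : ℝ) : ℂ) * η + ((ω : ℝ) : ℂ))‖ < 1) := by
  set c := η.re with hc
  set d := η.im with hd
  have hs : c ^ 2 + d ^ 2 ≤ c := by
    have := Complex.sq_norm η
    rw [Complex.normSq_apply] at this
    nlinarith [h]
  have hs1 : c ^ 2 + d ^ 2 ≤ 1 := by nlinarith [sq_nonneg d, sq_nonneg (c - 1)]
  set X := ((1 / 2 : ℂ) * (((2 - ω : ℝ) : ℂ) * η + ((ω : ℝ) : ℂ))) with hX
  have hXre : X.re = ((2 - ω) * c + ω) / 2 := by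
    simp [hX, Complex.add_re, Complex.mul_re, Complex.ofReal_re, Complex.ofReal_im]
    ring
  have hXim : X.im = (2 - ω) * d / 2 := by
    simp [hX, Complex.add_im, Complex.mul_im, Complex.ofReal_re, Complex.ofReal_im]
    ring
  have hnsq : ‖X‖ ^ 2 = (((2 - ω) * c + ω) / 2) ^ 2 + ((2 - ω) * d / 2) ^ 2 := by
    rw [Complex.sq_norm, Complex.normSq_apply, hXre, hXim]; ring
  have heta : ‖η‖ ^ 2 = c ^ 2 + d ^ 2 := by
    rw [Complex.sq_norm, Complex.normSq_apply]; ring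
  have key : ‖η‖ ^ 2 ≤ ‖X‖ ^ 2 := by
    rw [hnsq, heta]
    nlinarith [mul_nonneg (mul_nonneg hω0.le (by linarith : (0:ℝ) ≤ 2 - ω))
      (by linarith : (0:ℝ) ≤ c - (c ^ 2 + d ^ 2)), mul_nonneg (mul_nonneg hω0.le hω0.le)
      (by linarith : (0:ℝ) ≤ 1 - (c ^ 2 + d ^ 2))]
  constructor
  · have h1 := norm_nonneg η
    have h2 := norm_nonneg X
    nlinarith [key]
  · intro hlt
    have hsl : c ^ 2 + d ^ 2 < 1 := by rw [← heta]; nlinarith [norm_nonneg η]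
    have hcl : c < 1 := by nlinarith [sq_nonneg d, sq_nonneg (c - 1)]
    have : ‖X‖ ^ 2 < 1 := by
      rw [hnsq]
      nlinarith [mul_pos hω0 (by linarith : (0:ℝ) < 2 - ω), sq_nonneg d,
        mul_nonneg (mul_nonneg hω0.le (by linarith : (0:ℝ) ≤ 2 - ω)) (by linarith : 0 ≤ 1 - c)]
    nlinarith [norm_nonneg X]
end
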